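/- Let v: ℍ → ℍ be holomorphic on the right half-plane ℍ = {Re ζ > 0}, mapping (0,∞) into (0,∞), and suppose there exists F holomorphic on the unit disk with F(e^{−ζ}) = exp(−v(ζ)) for all ζ ∈ ℍ. If v is injective on ℍ, then lim_{θ→+∞} v(θ) = +∞ and F(0) = 0. -/

import Mathlib

open Set Complex Filter
open Topology

/-- If `v : ℍ → ℍ` is holomorphic on the right half-plane, maps `(0,∞)` into
`(0,∞)`, is injective on `ℍ`, and lifts a holomorphic `F` on the unit disk via
`F(e^{-ζ}) = e^{-v(ζ)}`, then `v(θ) → +∞` as `θ → +∞` along the reals and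
`F(0) = 0`. -/
theorem lift_limit_and_F_zero (v F : ℂ → ℂ)
    (hv : DifferentiableOn ℂ v {ζ : ℂ | 0 < ζ.re})
    (hself : ∀ ζ : ℂ, 0 < ζ.re → 0 < (v ζ).re)
    (hreal : ∀ θ : ℝ, 0 < θ → (v θ).im = 0 ∧ 0 < (v θ).re)
    (hF : DifferentiableOn ℂ F (Metric.ball (0:ℂ) 1))
    (hlift : ∀ ζ : ℂ, 0 < ζ.re → F (Complex.exp (-ζ)) = Complex.exp (-(v ζ)))
    (hinj : InjOn v {ζ : ℂ | 0 < ζ.re}) :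
    Tendsto (fun θ : ℝ => (v θ).re) atTop atTop ∧ F 0 = 0 := by
  have hFc : ContinuousAt F 0 :=
    (hF.continuousOn.continuousAt (Metric.isOpen_ball.mem_nhds (by simp)))
  have hF0 : F 0 = 0 := by
    by_contra hc
    set c := F 0 with hc_def
    -- choose a small radius where F is close to c and inside the unit ball
    have hball : ∀ᶠ z in 𝓝 (0:ℂ), F z ∈ Metric.ball c (‖c‖/2) ∧ z ∈ Metric.ball (0:ℂ) 1 := by
      have h1 : ∀ᶠ z in 𝓝 (0:ℂ), F z ∈ Metric.ball c (‖c‖/2) := by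
        have : Metric.ball c (‖c‖/2) ∈ 𝓝 c := Metric.ball_mem_nhds c (by have : (0:ℝ) < ‖c‖ := norm_pos_iff.2 hc; linarith)
        exact hFc this
      have h2 : ∀ᶠ z in 𝓝 (0:ℂ), z ∈ Metric.ball (0:ℂ) 1 :=
        Metric.isOpen_ball.mem_nhds (by simp)
      exact h1.and h2
    obtain ⟨r, hr0, hr⟩ := Metric.eventually_nhds_iff_ball.1 hball
    -- key facts about F near 0
    have hkey : ∀ z : ℂ, z ∈ Metric.ball (0:ℂ) r →
        F z ≠ 0 ∧ F z / c ∈ Complex.slitPlane := by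
      intro z hz
      have h := (hr z hz).1
      rw [Metric.mem_ball, dist_eq_norm] at h
      have hcne : c ≠ 0 := hc
      have hcpos : (0:ℝ) < ‖c‖ := norm_pos_iff.2 hcne
      have hne : F z ≠ 0 := by
        intro h0
        rw [h0, zero_sub, norm_neg] at h
        linarith
      refine ⟨hne, ?_⟩
      rw [Complex.mem_slitPlane_iff]
      left
      have hdiv : ‖F z / c - 1‖ < 1/2 := by
        have : F z / c - 1 = (F z - c) / c := by field_simp
        rw [this, norm_div]
        rw [div_lt_iff₀ hcpos] at *
        calc ‖F z - c‖ < ‖c‖/2 := h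
        _ = 1/2 * ‖c‖ := by ring
      have hre : |(F z / c - 1).re| ≤ ‖F z / c - 1‖ := Complex.abs_re_le_norm _
      have : (F z / c).re = 1 + (F z / c - 1).re := by simp
      rw [this]
      have := abs_le.1 hre
      linarith
    -- choose R
    set R : ℝ := max 1 (-Real.log r + 1) with hR_def
    set S : Set ℂ := {ζ : ℂ | R < ζ.re} with hS_def
    have hSopen : IsOpen S := isOpen_lt continuous_const Complex.continuous_re
    have hSsub : S ⊆ {ζ : ℂ | 0 < ζ.re} := by
      intro ζ hζ
      have : (1:ℝ) ≤ R := le_max_left _ _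
      have hζ' : R < ζ.re := hζ
      simp only [mem_setOf_eq]; linarith
    have hSexp : ∀ ζ ∈ S, Complex.exp (-ζ) ∈ Metric.ball (0:ℂ) r := by
      intro ζ hζ
      have hζ' : R < ζ.re := hζ
      rw [Metric.mem_ball, dist_zero_right, Complex.norm_exp]
      have h1 : -Real.log r + 1 ≤ R := le_max_right _ _
      have : (-ζ).re < Real.log r := by
        simp only [Complex.neg_re]; linarith
      calc Real.exp (-ζ).re < Real.exp (Real.log r) := Real.exp_lt_exp.2 this
      _ = r := Real.exp_log hr0
    -- the "unwound" function
    set u : ℂ → ℂ := fun ζ => v ζ + Complex.log (F (Complex.exp (-ζ)) / c) with hu_def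
    have hexp_u : ∀ ζ ∈ S, Complex.exp (-(u ζ)) = c := by
      intro ζ hζ
      obtain ⟨hne, _⟩ := hkey _ (hSexp ζ hζ)
      have hl := hlift ζ (hSsub hζ)
      have hcne : c ≠ 0 := hc
      have hdivne : F (Complex.exp (-ζ)) / c ≠ 0 := div_ne_zero hne hcne
      have e1 : Complex.exp (-(Complex.log (F (Complex.exp (-ζ)) / c)))
          = (F (Complex.exp (-ζ)) / c)⁻¹ := by
        rw [Complex.exp_neg, Complex.exp_log hdivne]
      calc Complex.exp (-(u ζ))
          = Complex.exp (-(v ζ)) * Complex.exp (-(Complex.log (F (Complex.exp (-ζ)) / c))) := by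
            rw [hu_def]; rw [neg_add, Complex.exp_add]
        _ = F (Complex.exp (-ζ)) * (F (Complex.exp (-ζ)) / c)⁻¹ := by rw [← hl, e1]
        _ = c := by field_simp
    -- u is differentiable on S with zero derivative
    have hud : ∀ ζ ∈ S, DifferentiableAt ℂ u ζ := by
      intro ζ hζ
      have h1 : DifferentiableAt ℂ v ζ :=
        (hv ζ (hSsub hζ)).differentiableAt
          ((isOpen_lt continuous_const Complex.continuous_re).mem_nhds (hSsub hζ))
      have h2 : DifferentiableAt ℂ (fun ζ => Complex.exp (-ζ)) ζ :=
        (differentiable_neg ζ).cexp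
      have h3 : DifferentiableAt ℂ F (Complex.exp (-ζ)) :=
        (hF _ ((hr _ (hSexp ζ hζ)).2)).differentiableAt
          (Metric.isOpen_ball.mem_nhds ((hr _ (hSexp ζ hζ)).2))
      have h4 : DifferentiableAt ℂ Complex.log (F (Complex.exp (-ζ)) / c) :=
        Complex.differentiableAt_log (hkey _ (hSexp ζ hζ)).2
      exact h1.add (by have := (h4.comp ζ ((h3.comp ζ h2).div_const c)); exact this)
    have hderiv0 : ∀ ζ ∈ S, HasDerivAt u 0 ζ := by
      intro ζ hζ
      have hd : HasDerivAt u (deriv u ζ) ζ := (hud ζ hζ).hasDerivAt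
      have hg : HasDerivAt (fun ζ => Complex.exp (-(u ζ)))
          (Complex.exp (-(u ζ)) * -(deriv u ζ)) ζ := hd.neg.cexp
      have hconst : (fun ζ => Complex.exp (-(u ζ))) =ᶠ[𝓝 ζ] fun _ => c := by
        filter_upwards [hSopen.mem_nhds hζ] with x hx using hexp_u x hx
      have hg0 : HasDerivAt (fun ζ => Complex.exp (-(u ζ))) 0 ζ :=
        (hasDerivAt_const ζ c).congr_of_eventuallyEq hconst
      have : Complex.exp (-(u ζ)) * -(deriv u ζ) = 0 := hg.unique hg0
      have hne : Complex.exp (-(u ζ)) ≠ 0 := Complex.exp_ne_zero _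
      have : deriv u ζ = 0 := by
        rcases mul_eq_zero.1 this with h | h
        · exact absurd h hne
        · exact neg_eq_zero.1 h
      rwa [this] at hd
    -- u is constant on S (convex)
    have hSconv : Convex ℝ S := convex_halfSpace_re_gt R
    have hconst : ∀ x ∈ S, ∀ y ∈ S, u x = u y := by
      intro x hx y hy
      refine hSconv.is_const_of_fderivWithin_eq_zero
        (fun z hz => (hud z hz).differentiableWithinAt) ?_ hx hy
      intro z hz
      have h1 : fderivWithin ℂ u S z = fderiv ℂ u z :=
        fderivWithin_of_isOpen hSopen hz
      have h2 : HasFDerivAt u ((ContinuousLinearMap.smulRight (1 : ℂ →L[ℂ] ℂ) (0:ℂ))) z :=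
        (hderiv0 z hz).hasFDerivAt
      rw [h1, h2.fderiv]
      ext w : 1
      simp
    -- derive contradiction with injectivity
    set ζ₀ : ℂ := ((R + 1 : ℝ) : ℂ) with hζ₀
    set ζ₁ : ℂ := ζ₀ + 2 * Real.pi * Complex.I with hζ₁
    have hζ₀S : ζ₀ ∈ S := by simp [hS_def, hζ₀]
    have hζ₁S : ζ₁ ∈ S := by simp [hS_def, hζ₁, hζ₀]
    have hexp_eq : Complex.exp (-ζ₁) = Complex.exp (-ζ₀) := by
      rw [hζ₁, neg_add, Complex.exp_add]
      have : Complex.exp (-(2 * (Real.pi:ℂ) * Complex.I)) = 1 := by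
        rw [Complex.exp_neg, Complex.exp_two_pi_mul_I, inv_one]
      rw [this, mul_one]
    have huv : v ζ₀ = v ζ₁ := by
      have := hconst ζ₀ hζ₀S ζ₁ hζ₁S
      simp only [hu_def, hexp_eq] at this
      exact add_right_cancel this
    have : ζ₀ = ζ₁ := hinj (hSsub hζ₀S) (hSsub hζ₁S) huv
    rw [hζ₁, left_eq_add] at this
    have hπ : (Real.pi : ℂ) ≠ 0 := Complex.ofReal_ne_zero.2 Real.pi_ne_zero
    simp [Complex.ext_iff, Real.pi_ne_zero] at this
  refine ⟨?_, hF0⟩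
  -- the limit
  have h1 : Tendsto (fun θ : ℝ => Complex.exp (-(θ:ℂ))) atTop (𝓝 0) := by
    rw [tendsto_zero_iff_norm_tendsto_zero]
    have : (fun θ : ℝ => ‖Complex.exp (-(θ:ℂ))‖) = fun θ : ℝ => Real.exp (-θ) := by
      funext θ
      rw [Complex.norm_exp]
      simp
    rw [this]
    exact Real.tendsto_exp_atBot.comp tendsto_neg_atTop_atBot
  have h2 : Tendsto (fun θ : ℝ => F (Complex.exp (-(θ:ℂ)))) atTop (𝓝 0) := by
    rw [← hF0]
    exact hFc.tendsto.comp h1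
  have h3 : Tendsto (fun θ : ℝ => Complex.exp (-(v (θ:ℂ)))) atTop (𝓝 0) := by
    refine h2.congr' ?_
    filter_upwards [eventually_gt_atTop (0:ℝ)] with θ hθ
    exact hlift θ (by simpa using hθ)
  have h4 : Tendsto (fun θ : ℝ => Real.exp (-(v (θ:ℂ)).re)) atTop (𝓝 0) := by
    have := tendsto_zero_iff_norm_tendsto_zero.1 h3
    refine this.congr ?_
    intro θ
    rw [Complex.norm_exp]
    simp
  rw [Real.tendsto_exp_comp_nhds_zero] at h4
  exact tendsto_neg_atBot_iff.1 h4
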